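/- Uniform spectral bound along the covariance Riccati flow: Let d ≥ 1 and B a symmetric positive definite d×d real matrix. Suppose C : [0,∞) → d×d real matrices is differentiable with C'(t) = 2 C(t) − 2 C(t) B⁻¹ C(t) and C(t) symmetric positive definite for every t ≥ 0. Then for every t ≥ 0: ‖C(t)‖₂ ≤ ‖B‖₂ · max{ 1, ‖B^{−1/2} C(0) B^{−1/2}‖₂ }, where B^{−1/2} is the inverse of the positive definite square root of B. -/

import Mathlib

open Matrix

open scoped ComplexOrder in
/-- The positive semidefinite square root of a positive semidefinite matrix
(the definition `Matrix.PosSemidef.sqrt` of the older Mathlib, since removed). -/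
noncomputable def Matrix.PosSemidef.sqrt {n 𝕜 : Type*} [Fintype n] [RCLike 𝕜] [DecidableEq n]
    {A : Matrix n n 𝕜} (hA : A.PosSemidef) : Matrix n n 𝕜 :=
  hA.1.eigenvectorUnitary.1 * diagonal ((↑) ∘ (√·) ∘ hA.1.eigenvalues) *
  (star hA.1.eigenvectorUnitary : Matrix n n 𝕜)

/-- The spectral norm (`ℓ² → ℓ²` operator norm) of a real square matrix. -/
noncomputable def matSpectralNorm {d : ℕ} (M : Matrix (Fin d) (Fin d) ℝ) : ℝ :=
  ‖LinearMap.toContinuousLinearMap (Matrix.toEuclideanLin M)‖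

open scoped ComplexOrder in
lemma Matrix.PosSemidef.posSemidef_sqrt {n 𝕜 : Type*} [Fintype n] [RCLike 𝕜] [DecidableEq n]
    {A : Matrix n n 𝕜} (hA : A.PosSemidef) : hA.sqrt.PosSemidef := by
  unfold Matrix.PosSemidef.sqrt
  have := (PosSemidef.diagonal (R := 𝕜) (d := ((↑) ∘ (√·) ∘ hA.1.eigenvalues)) ?_).mul_mul_conjTranspose_same
    (hA.1.eigenvectorUnitary : Matrix n n 𝕜)
  · simpa [star_eq_conjTranspose] using this
  · intro i
    simp [Real.sqrt_nonneg]

open scoped ComplexOrder in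
lemma Matrix.PosSemidef.sqrt_mul_self {n 𝕜 : Type*} [Fintype n] [RCLike 𝕜] [DecidableEq n]
    {A : Matrix n n 𝕜} (hA : A.PosSemidef) : hA.sqrt * hA.sqrt = A := by
  unfold Matrix.PosSemidef.sqrt
  calc _ = hA.1.eigenvectorUnitary.1 *
        (diagonal ((↑) ∘ (√·) ∘ hA.1.eigenvalues) *
          ((star hA.1.eigenvectorUnitary : Matrix n n 𝕜) * hA.1.eigenvectorUnitary.1) *
          diagonal ((↑) ∘ (√·) ∘ hA.1.eigenvalues)) *
        (star hA.1.eigenvectorUnitary : Matrix n n 𝕜) := by simp only [Matrix.mul_assoc]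
  _ = hA.1.eigenvectorUnitary.1 * diagonal (RCLike.ofReal ∘ hA.1.eigenvalues) *
        (star hA.1.eigenvectorUnitary : Matrix n n 𝕜) := by
      rw [Unitary.coe_star_mul_self, Matrix.mul_one, diagonal_mul_diagonal]
      congr 3
      funext i
      simp [← RCLike.ofReal_mul, Real.mul_self_sqrt (hA.eigenvalues_nonneg i)]
  _ = A := by conv_rhs => rw [hA.1.spectral_theorem, Unitary.conjStarAlgAut_apply]

section Aux1
open scoped Matrix.Norms.L2Operator RealInnerProductSpace
variable {d : ℕ}

lemma spectralNorm_eq_norm (M : Matrix (Fin d) (Fin d) ℝ) : matSpectralNorm M = ‖M‖ := rfl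

lemma norm_toEuclideanLin_apply_le (M : Matrix (Fin d) (Fin d) ℝ)
    (z : EuclideanSpace ℝ (Fin d)) :
    ‖toEuclideanLin M z‖ ≤ matSpectralNorm M * ‖z‖ :=
  (LinearMap.toContinuousLinearMap (Matrix.toEuclideanLin M)).le_opNorm z

lemma rayleigh_le (M : Matrix (Fin d) (Fin d) ℝ) (z : EuclideanSpace ℝ (Fin d)) :
    ⟪z, toEuclideanLin M z⟫ ≤ matSpectralNorm M * ‖z‖ ^ 2 := by
  calc ⟪z, toEuclideanLin M z⟫ ≤ ‖z‖ * ‖toEuclideanLin M z‖ := real_inner_le_norm _ _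
  _ ≤ ‖z‖ * (matSpectralNorm M * ‖z‖) :=
      mul_le_mul_of_nonneg_left (norm_toEuclideanLin_apply_le M z) (norm_nonneg _)
  _ = matSpectralNorm M * ‖z‖ ^ 2 := by ring

lemma quad_nonneg {M : Matrix (Fin d) (Fin d) ℝ} (hM : M.PosSemidef)
    (z : EuclideanSpace ℝ (Fin d)) : 0 ≤ ⟪z, toEuclideanLin M z⟫ := by
  rw [EuclideanSpace.inner_eq_star_dotProduct, ofLp_toEuclideanLin_apply]
  rw [dotProduct_comm]
  exact hM.dotProduct_mulVec_nonneg _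

lemma spectralNorm_le_of_quad {M : Matrix (Fin d) (Fin d) ℝ} (hM : M.PosSemidef)
    {K : ℝ} (hK : 0 ≤ K)
    (h : ∀ z : EuclideanSpace ℝ (Fin d), ⟪z, toEuclideanLin M z⟫ ≤ K * ‖z‖ ^ 2) :
    matSpectralNorm M ≤ K := by
  have hsym := (isHermitian_iff_isSymmetric.mp hM.1)
  refine ContinuousLinearMap.opNorm_le_bound _ hK ?_
  intro x
  show ‖toEuclideanLin M x‖ ≤ K * ‖x‖
  by_cases hx : toEuclideanLin M x = 0
  · rw [hx, norm_zero]; positivity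
  have hxne : x ≠ 0 := by rintro rfl; simp at hx
  set y : EuclideanSpace ℝ (Fin d) := (‖x‖ / ‖toEuclideanLin M x‖) • toEuclideanLin M x with hy
  have hny : ‖y‖ = ‖x‖ := by
    rw [hy, norm_smul, norm_div, Real.norm_eq_abs, abs_norm, Real.norm_eq_abs, abs_norm,
      div_mul_cancel₀ _ (norm_ne_zero_iff.mpr hx)]
  have hw : ‖toEuclideanLin M x‖ ≠ 0 := norm_ne_zero_iff.mpr hx
  have hyx : ⟪y, toEuclideanLin M x⟫ = ‖x‖ * ‖toEuclideanLin M x‖ := by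
    rw [hy, real_inner_smul_left, real_inner_self_eq_norm_sq]
    field_simp
  have hxy : ⟪x, toEuclideanLin M y⟫ = ⟪y, toEuclideanLin M x⟫ := by
    rw [← hsym x y, real_inner_comm]
  have hkey : 4 * (‖x‖ * ‖toEuclideanLin M x‖) =
      ⟪x + y, toEuclideanLin M (x + y)⟫ - ⟪x - y, toEuclideanLin M (x - y)⟫ := by
    simp only [map_add, map_sub, inner_add_left, inner_add_right, inner_sub_left,
      inner_sub_right]
    rw [hxy, hyx]
    ring
  have hle : 4 * (‖x‖ * ‖toEuclideanLin M x‖) ≤ K * (2 * ‖x‖) ^ 2 := by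
    rw [hkey]
    have h1 : ⟪x + y, toEuclideanLin M (x + y)⟫ ≤ K * (2 * ‖x‖) ^ 2 := by
      refine (h (x + y)).trans ?_
      have hn : ‖x + y‖ ≤ 2 * ‖x‖ := by
        calc ‖x + y‖ ≤ ‖x‖ + ‖y‖ := norm_add_le _ _
        _ = 2 * ‖x‖ := by rw [hny]; ring
      exact mul_le_mul_of_nonneg_left (pow_le_pow_left₀ (norm_nonneg _) hn 2) hK
    have h2 : 0 ≤ ⟪x - y, toEuclideanLin M (x - y)⟫ := quad_nonneg hM _
    linarith
  have hxpos : 0 < ‖x‖ := norm_pos_iff.mpr hxne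
  nlinarith [hle, hxpos]

lemma sqrt_det_ne {B : Matrix (Fin d) (Fin d) ℝ} (hB : B.PosDef) :
    IsUnit (hB.posSemidef.sqrt).det := by
  have h := hB.posSemidef.sqrt_mul_self
  have hdd : (hB.posSemidef.sqrt).det * (hB.posSemidef.sqrt).det = B.det := by
    rw [← det_mul, h]
  have hBd := hB.det_pos
  refine isUnit_iff_ne_zero.mpr fun h0 => ?_
  rw [h0, mul_zero] at hdd
  exact hBd.ne hdd

lemma spectralNorm_sq_sqrt {B : Matrix (Fin d) (Fin d) ℝ} (hB : B.PosDef) :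
    matSpectralNorm hB.posSemidef.sqrt * matSpectralNorm hB.posSemidef.sqrt = matSpectralNorm B := by
  rw [spectralNorm_eq_norm, spectralNorm_eq_norm, ← Matrix.l2_opNorm_conjTranspose_mul_self,
    hB.posSemidef.posSemidef_sqrt.isHermitian.eq, hB.posSemidef.sqrt_mul_self]

lemma assemble {B X : Matrix (Fin d) (Fin d) ℝ} (hB : B.PosDef) {K : ℝ}
    (hX : matSpectralNorm ((hB.posSemidef.sqrt)⁻¹ * X * (hB.posSemidef.sqrt)⁻¹) ≤ K) :
    matSpectralNorm X ≤ matSpectralNorm B * K := by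
  set S := hB.posSemidef.sqrt with hS
  have hdet := sqrt_det_ne hB
  have hrec : X = S * (S⁻¹ * X * S⁻¹) * S := by
    rw [Matrix.mul_assoc, Matrix.mul_assoc, Matrix.nonsing_inv_mul _ hdet, mul_one,
      ← Matrix.mul_assoc, Matrix.mul_nonsing_inv _ hdet, one_mul]
  have hK0 : 0 ≤ K := le_trans (by rw [spectralNorm_eq_norm]; exact norm_nonneg _) hX
  calc matSpectralNorm X = ‖S * (S⁻¹ * X * S⁻¹) * S‖ := by rw [spectralNorm_eq_norm, ← hrec]
  _ ≤ ‖S * (S⁻¹ * X * S⁻¹)‖ * ‖S‖ := norm_mul_le _ _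
  _ ≤ ‖S‖ * ‖S⁻¹ * X * S⁻¹‖ * ‖S‖ :=
      mul_le_mul_of_nonneg_right (norm_mul_le _ _) (norm_nonneg _)
  _ ≤ ‖S‖ * K * ‖S‖ := by
      refine mul_le_mul_of_nonneg_right (mul_le_mul_of_nonneg_left ?_ (norm_nonneg _))
        (norm_nonneg _)
      rw [← spectralNorm_eq_norm]; exact hX
  _ = matSpectralNorm S * matSpectralNorm S * K := by
      rw [spectralNorm_eq_norm]; ring
  _ = matSpectralNorm B * K := by rw [spectralNorm_sq_sqrt hB]
end Aux1

attribute [local instance] Matrix.normedAddCommGroup Matrix.normedSpace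

section Aux2
open scoped RealInnerProductSpace
variable {d : ℕ}

/-- The quadratic form `M ↦ ⟪v, S M S v⟫` as a linear map in `M`. -/
noncomputable def qform (S : Matrix (Fin d) (Fin d) ℝ) (v : EuclideanSpace ℝ (Fin d)) :
    Matrix (Fin d) (Fin d) ℝ →ₗ[ℝ] ℝ where
  toFun M := ⟪v, toEuclideanLin (S * M * S) v⟫
  map_add' M N := by
    simp [Matrix.mul_add, Matrix.add_mul, inner_add_right]
  map_smul' c M := by
    simp [mul_smul_comm, smul_mul_assoc, inner_smul_right]

lemma quad_bound {B : Matrix (Fin d) (Fin d) ℝ} (hB : B.PosDef)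
    {C : ℝ → Matrix (Fin d) (Fin d) ℝ}
    (hC : ∀ t, 0 ≤ t → HasDerivAt C (2 * C t - 2 * (C t * B⁻¹ * C t)) t)
    (hCpos : ∀ t, 0 ≤ t → (C t).PosDef)
    (v : EuclideanSpace ℝ (Fin d)) (hv : ‖v‖ = 1) {t : ℝ} (ht : 0 ≤ t) :
    ⟪v, toEuclideanLin ((hB.posSemidef.sqrt)⁻¹ * C t * (hB.posSemidef.sqrt)⁻¹) v⟫ ≤
      max 1 (matSpectralNorm ((hB.posSemidef.sqrt)⁻¹ * C 0 * (hB.posSemidef.sqrt)⁻¹)) := by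
  set S := hB.posSemidef.sqrt with hSdef
  set K := max 1 (matSpectralNorm (S⁻¹ * C 0 * S⁻¹)) with hKdef
  have hK1 : (1 : ℝ) ≤ K := le_max_left _ _
  have hinvH : (S⁻¹)ᴴ = S⁻¹ := hB.posSemidef.posSemidef_sqrt.isHermitian.inv
  have hBinv : B⁻¹ = S⁻¹ * S⁻¹ := by
    rw [← hB.posSemidef.sqrt_mul_self, Matrix.mul_inv_rev]
  -- the flow conjugated by `S⁻¹`
  set L := qform S⁻¹ v with hL
  set φ : ℝ → ℝ := fun s => L (C s) with hφ
  have hφeq : ∀ s, φ s = ⟪v, toEuclideanLin (S⁻¹ * C s * S⁻¹) v⟫ := fun s => rfl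
  have hDps : ∀ s, 0 ≤ s → (S⁻¹ * C s * S⁻¹).PosSemidef := by
    intro s hs
    have := (hCpos s hs).posSemidef.mul_mul_conjTranspose_same S⁻¹
    rwa [hinvH] at this
  set g : ℝ → ℝ := fun s =>
    2 * φ s - 2 * ⟪toEuclideanLin (S⁻¹ * C s * S⁻¹) v,
      toEuclideanLin (S⁻¹ * C s * S⁻¹) v⟫ with hg
  have hder : ∀ s, 0 ≤ s → HasDerivAt φ (g s) s := by
    intro s hs
    have h1 : HasDerivAt φ (L (2 * C s - 2 * (C s * B⁻¹ * C s))) s := by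
      have := (L.toContinuousLinearMap.hasFDerivAt
        (x := C s)).comp_hasDerivAt s (hC s hs)
      exact this
    have hmat : S⁻¹ * (C s * B⁻¹ * C s) * S⁻¹ =
        (S⁻¹ * C s * S⁻¹) * (S⁻¹ * C s * S⁻¹) := by
      rw [hBinv]; simp only [Matrix.mul_assoc]
    have happ : toEuclideanLin ((S⁻¹ * C s * S⁻¹) * (S⁻¹ * C s * S⁻¹)) v =
        toEuclideanLin (S⁻¹ * C s * S⁻¹) (toEuclideanLin (S⁻¹ * C s * S⁻¹) v) := by
      simp only [Matrix.toEuclideanLin_apply]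
      simp [Matrix.mulVec_mulVec]
    have hsym := isHermitian_iff_isSymmetric.mp (hDps s hs).1
    have hval : L (2 * C s - 2 * (C s * B⁻¹ * C s)) = g s := by
      have h2 : (2 : Matrix (Fin d) (Fin d) ℝ) * C s = C s + C s := two_mul _
      have h3 : (2 : Matrix (Fin d) (Fin d) ℝ) * (C s * B⁻¹ * C s) =
          C s * B⁻¹ * C s + C s * B⁻¹ * C s := two_mul _
      rw [map_sub, h2, h3, map_add, map_add]
      have hLq : L (C s * B⁻¹ * C s) =
          ⟪toEuclideanLin (S⁻¹ * C s * S⁻¹) v, toEuclideanLin (S⁻¹ * C s * S⁻¹) v⟫ := by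
        show ⟪v, toEuclideanLin (S⁻¹ * (C s * B⁻¹ * C s) * S⁻¹) v⟫ = _
        rw [hmat, happ, ← hsym]
      rw [hLq, hg]
      show φ s + φ s - _ = _
      ring
    rwa [hval] at h1
  have hgle : ∀ s, 0 ≤ s → g s ≤ 2 * φ s - 2 * (φ s) ^ 2 := by
    intro s hs
    have hCS := real_inner_mul_inner_self_le v (toEuclideanLin (S⁻¹ * C s * S⁻¹) v)
    have hvv : ⟪v, v⟫ = 1 := by rw [real_inner_self_eq_norm_sq, hv]; norm_num
    rw [hvv, one_mul] at hCS
    have : (φ s) ^ 2 ≤ ⟪toEuclideanLin (S⁻¹ * C s * S⁻¹) v,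
        toEuclideanLin (S⁻¹ * C s * S⁻¹) v⟫ := by
      rw [hφeq, pow_two]; exact hCS
    simp only [hg]
    linarith
  have hφ0 : φ 0 ≤ K := by
    rw [hφeq]
    calc ⟪v, toEuclideanLin (S⁻¹ * C 0 * S⁻¹) v⟫ ≤
        matSpectralNorm (S⁻¹ * C 0 * S⁻¹) * ‖v‖ ^ 2 := rayleigh_le _ _
    _ = matSpectralNorm (S⁻¹ * C 0 * S⁻¹) := by rw [hv]; ring
    _ ≤ K := le_max_right _ _
  show φ t ≤ K
  refine le_of_forall_pos_le_add fun ε hε => ?_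
  have key : ∀ ⦃x⦄, x ∈ Set.Icc 0 t → φ x ≤ K + ε := by
    refine image_le_of_deriv_right_lt_deriv_boundary (f' := g)
      (fun s hs => ((hder s hs.1).continuousAt).continuousWithinAt)
      (fun s hs => (hder s hs.1).hasDerivWithinAt)
      (by linarith) (B' := fun _ => 0) (fun x => hasDerivAt_const _ _) ?_
    intro x hx hcontact
    have h1 := hgle x hx.1
    have h2 : 1 < φ x := by rw [hcontact]; linarith
    show g x < 0
    nlinarith [mul_pos (by linarith : (0:ℝ) < φ x) (by linarith : (0:ℝ) < φ x - 1)]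
  exact key ⟨ht, le_rfl⟩
end Aux2

/-- Uniform spectral bound along the covariance Riccati flow:
`‖C(t)‖₂ ≤ ‖B‖₂ · max 1 ‖B^{-1/2} C(0) B^{-1/2}‖₂`. -/
theorem stmt7 (d : ℕ) (hd : 1 ≤ d)
    (B : Matrix (Fin d) (Fin d) ℝ) (hB : B.PosDef)
    (C : ℝ → Matrix (Fin d) (Fin d) ℝ)
    (hC : ∀ t, 0 ≤ t → HasDerivAt C (2 * C t - 2 * (C t * B⁻¹ * C t)) t)
    (hCpos : ∀ t, 0 ≤ t → (C t).PosDef) :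
    ∀ t, 0 ≤ t →
      matSpectralNorm (C t) ≤ matSpectralNorm B *
        max 1 (matSpectralNorm ((hB.posSemidef.sqrt)⁻¹ * C 0 * (hB.posSemidef.sqrt)⁻¹)) := by
  intro t ht
  open scoped RealInnerProductSpace in
  set S := hB.posSemidef.sqrt with hSdef
  set K := max 1 (matSpectralNorm (S⁻¹ * C 0 * S⁻¹)) with hKdef
  have hK0 : (0 : ℝ) ≤ K := le_trans zero_le_one (le_max_left _ _)
  have hinvH : (S⁻¹)ᴴ = S⁻¹ := hB.posSemidef.posSemidef_sqrt.isHermitian.inv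
  have hDps : (S⁻¹ * C t * S⁻¹).PosSemidef := by
    have := (hCpos t ht).posSemidef.mul_mul_conjTranspose_same S⁻¹
    rwa [hinvH] at this
  have hquad : ∀ z : EuclideanSpace ℝ (Fin d),
      ⟪z, toEuclideanLin (S⁻¹ * C t * S⁻¹) z⟫ ≤ K * ‖z‖ ^ 2 := by
    intro z
    by_cases hz : z = 0
    · simp [hz]
    · have hnz : ‖z‖ ≠ 0 := norm_ne_zero_iff.mpr hz
      have hv : ‖(‖z‖⁻¹ • z : EuclideanSpace ℝ (Fin d))‖ = 1 := norm_smul_inv_norm hz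
      have h1 := quad_bound hB hC hCpos (‖z‖⁻¹ • z) hv ht
      rw [_root_.map_smul, real_inner_smul_left, real_inner_smul_right] at h1
      have h2 : ⟪z, toEuclideanLin (S⁻¹ * C t * S⁻¹) z⟫ ≤ ‖z‖ ^ 2 * K := by
        have hz2 : (0 : ℝ) < ‖z‖ ^ 2 := by positivity
        have := mul_le_mul_of_nonneg_left h1 hz2.le
        calc ⟪z, toEuclideanLin (S⁻¹ * C t * S⁻¹) z⟫
            = ‖z‖ ^ 2 * (‖z‖⁻¹ * (‖z‖⁻¹ * ⟪z, toEuclideanLin (S⁻¹ * C t * S⁻¹) z⟫)) := by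
              field_simp
        _ ≤ ‖z‖ ^ 2 * K := this
      linarith [h2]
  have hDK : matSpectralNorm (S⁻¹ * C t * S⁻¹) ≤ K := spectralNorm_le_of_quad hDps hK0 hquad
  exact assemble hB hDK
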